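/- Let P be the solution of the synaptic CME with initial condition P(N0,0,0)=1 and P(n,o,0)=0 for all other states. Then for every integer 0 ≤ n0 ≤ N0, the lower tail of the marginal P_N is nondecreasing in time: for all 0 ≤ t ≤ t' one has ∑_{n=0}^{n0} P_N(n, t) ≤ ∑_{n=0}^{n0} P_N(n, t'). -/

import Mathlib

open Finset

/-- Right-hand side of the synaptic chemical master equation (CME) for state `(n,o)`
at time `t`.  Terms referring to out-of-range indices are set to zero. -/
noncomputable def cmeRHS (N0 C : ℕ) (κd κe : ℝ) (κa : ℝ → ℝ)
    (P : ℕ → ℕ → ℝ → ℝ) (n o : ℕ) (t : ℝ) : ℝ :=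
  -(κd * (o : ℝ) + κe * ((n : ℝ) - (o : ℝ)) + κa t * ((n : ℝ) - (o : ℝ)) * ((C : ℝ) - (o : ℝ)))
      * P n o t
  + (if o + 1 ≤ C then κd * ((o : ℝ) + 1) * P n (o + 1) t else 0)
  + (if n + 1 ≤ N0 then κe * ((n : ℝ) + 1 - (o : ℝ)) * P (n + 1) o t else 0)
  + (if 1 ≤ o then κa t * ((n : ℝ) - (o : ℝ) + 1) * ((C : ℝ) - (o : ℝ) + 1) * P n (o - 1) t
     else 0)

/-- `P` solves the synaptic CME on `[0,∞)`. -/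
def IsCMESolution (N0 C : ℕ) (κd κe : ℝ) (κa : ℝ → ℝ) (P : ℕ → ℕ → ℝ → ℝ) : Prop :=
  ∀ n, n ≤ N0 → ∀ o, o ≤ C → ∀ t : ℝ, 0 ≤ t →
    HasDerivAt (fun s => P n o s) (cmeRHS N0 C κd κe κa P n o t) t

/-- Marginal distribution of the total number of neurotransmitters:
`P_N(n,t) = ∑_{o=0}^{C} P(n,o,t)`. -/
noncomputable def margN (C : ℕ) (P : ℕ → ℕ → ℝ → ℝ) (n : ℕ) (t : ℝ) : ℝ :=
  ∑ o ∈ Finset.range (C + 1), P n o t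

/-- Marginal distribution of the number of occupied receptors:
`P_O(o,t) = ∑_{n=0}^{N0} P(n,o,t)`. -/
noncomputable def margO (N0 : ℕ) (P : ℕ → ℕ → ℝ → ℝ) (o : ℕ) (t : ℝ) : ℝ :=
  ∑ n ∈ Finset.range (N0 + 1), P n o t

/-- Binomial probability mass function `P_B(k; m, p)`. -/
noncomputable def binPMF (m : ℕ) (p : ℝ) (k : ℕ) : ℝ :=
  (m.choose k : ℝ) * p ^ k * (1 - p) ^ (m - k)

/-- Right-hand side of the CME truncated to the state set `S`: the entry for a state
`(n,o) ∈ S` keeps the full diagonal term but only receives inflow from states in `S`. -/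
noncomputable def truncRHS (N0 C : ℕ) (κd κe : ℝ) (κa : ℝ → ℝ)
    (S : Finset (ℕ × ℕ)) (Q : ℕ → ℕ → ℝ → ℝ) (n o : ℕ) (t : ℝ) : ℝ :=
  -(κd * (o : ℝ) + κe * ((n : ℝ) - (o : ℝ)) + κa t * ((n : ℝ) - (o : ℝ)) * ((C : ℝ) - (o : ℝ)))
      * Q n o t
  + (if o + 1 ≤ C ∧ (n, o + 1) ∈ S then κd * ((o : ℝ) + 1) * Q n (o + 1) t else 0)
  + (if n + 1 ≤ N0 ∧ (n + 1, o) ∈ S then κe * ((n : ℝ) + 1 - (o : ℝ)) * Q (n + 1) o t else 0)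
  + (if 1 ≤ o ∧ (n, o - 1) ∈ S then
      κa t * ((n : ℝ) - (o : ℝ) + 1) * ((C : ℝ) - (o : ℝ) + 1) * Q n (o - 1) t
     else 0)

/-- `Q` is the truncated solution on the state set `S` for `t ≥ tk`, with initial
condition `Q(tk) = P(tk)|_S`. -/
def IsTruncatedSolution (N0 C : ℕ) (κd κe : ℝ) (κa : ℝ → ℝ)
    (S : Finset (ℕ × ℕ)) (tk : ℝ) (P Q : ℕ → ℕ → ℝ → ℝ) : Prop :=
  (∀ p ∈ S, Q p.1 p.2 tk = P p.1 p.2 tk) ∧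
  (∀ p ∈ S, ∀ t : ℝ, tk ≤ t →
    HasDerivAt (fun s => Q p.1 p.2 s) (truncRHS N0 C κd κe κa S Q p.1 p.2 t) t)

set_option maxHeartbeats 1000000

open Set Filter in
lemma aux_deriv_nonpos_of_left {f : ℝ → ℝ} {d t0 a : ℝ} (h : HasDerivAt f d t0) (ha : a < t0)
    (hf : ∀ s, a < s → s < t0 → f t0 < f s) : d ≤ 0 := by
  have hs : Tendsto (slope f t0) (nhdsWithin t0 (Set.Iio t0)) (nhds d) :=
    (hasDerivAt_iff_tendsto_slope.mp h).mono_left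
      (nhdsWithin_mono _ (fun x hx => ne_of_lt hx))
  refine le_of_tendsto hs ?_
  filter_upwards [Ioo_mem_nhdsLT_of_mem (Set.mem_Ioc.mpr ⟨ha, le_refl t0⟩)] with s hs'
  rw [slope_def_field]
  apply div_nonpos_of_nonneg_of_nonpos
  · linarith [hf s hs'.1 hs'.2]
  · linarith [hs'.2]

open Set Filter in
lemma aux_nonneg_of_left {f : ℝ → ℝ} {t0 a : ℝ} (h : ContinuousAt f t0) (ha : a < t0)
    (hf : ∀ s, a < s → s < t0 → 0 ≤ f s) : 0 ≤ f t0 := by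
  have hs : Tendsto f (nhdsWithin t0 (Set.Iio t0)) (nhds (f t0)) :=
    h.continuousWithinAt.tendsto
  refine ge_of_tendsto hs ?_
  filter_upwards [Ioo_mem_nhdsLT_of_mem (Set.mem_Ioc.mpr ⟨ha, le_refl t0⟩)] with s hs'
  exact hf s hs'.1 hs'.2


open Set Filter in
lemma cme_vanish (N0 C : ℕ) (κd κe : ℝ) (κa : ℝ → ℝ)
    (hκd : 0 ≤ κd) (hκe : 0 ≤ κe) (hκa_cont : Continuous κa) (hκa : ∀ t, 0 ≤ κa t)
    (P : ℕ → ℕ → ℝ → ℝ) (hP : IsCMESolution N0 C κd κe κa P)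
    (hinit0 : ∀ n o : ℕ, ¬(n = N0 ∧ o = 0) → P n o 0 = 0) :
    ∀ t : ℝ, 0 ≤ t → ∀ n, n ≤ N0 → ∀ o, o ≤ C → n < o → P n o t = 0 := by
  intro T hT
  set B : Finset (ℕ × ℕ) :=
    ((Finset.range (N0+1)) ×ˢ (Finset.range (C+1))).filter (fun p => p.1 < p.2) with hB
  have hBmem : ∀ p : ℕ × ℕ, p ∈ B ↔ (p.1 ≤ N0 ∧ p.2 ≤ C ∧ p.1 < p.2) := by
    intro p
    simp only [hB, Finset.mem_filter, Finset.mem_product, Finset.mem_range, Nat.lt_succ_iff]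
    tauto
  obtain ⟨A0, hA⟩ := (isCompact_Icc (a := (0:ℝ)) (b := T)).exists_bound_of_continuousOn
    hκa_cont.continuousOn
  set A := max A0 0 with hAdef
  have hA' : ∀ s ∈ Set.Icc (0:ℝ) T, κa s ≤ A := by
    intro s hs
    have := hA s hs
    rw [Real.norm_eq_abs] at this
    exact le_trans (le_abs_self _) (le_trans this (le_max_left _ _))
  have hA0 : 0 ≤ A := le_max_right _ _
  set M : ℝ := 2*(κd*((C:ℝ)+1) + κe*((N0:ℝ)+(C:ℝ)+2) + A*((N0:ℝ)+(C:ℝ)+2)*((C:ℝ)+2)) with hM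
  have hM0 : 0 ≤ M := by positivity
  set S : ℝ → ℝ := fun s => ∑ q ∈ B, |P q.1 q.2 s| with hS
  have hS0 : ∀ s, 0 ≤ S s := by
    intro s; simp only [hS]; exact Finset.sum_nonneg (fun q _ => abs_nonneg _)
  have hle : ∀ s : ℝ, ∀ q ∈ B, |P q.1 q.2 s| ≤ S s := by
    intro s q hq; simp only [hS]
    exact Finset.single_le_sum (f := fun q : ℕ × ℕ => |P q.1 q.2 s|) (fun r _ => abs_nonneg _) hq
  -- key estimate on the RHS for bad states
  have key : ∀ s ∈ Set.Icc (0:ℝ) T, ∀ p ∈ B, |cmeRHS N0 C κd κe κa P p.1 p.2 s| ≤ M * S s := by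
    intro s hs p hp
    obtain ⟨n, o⟩ := p
    obtain ⟨hn, ho, hno⟩ := (hBmem _).mp hp
    have hterm : ∀ (c K : ℝ) (q : ℕ × ℕ), q ∈ B → |c| ≤ K → |c * P q.1 q.2 s| ≤ K * S s := by
      intro c K q hq hcK
      rw [abs_mul]
      exact mul_le_mul hcK (hle s q hq) (abs_nonneg _) (le_trans (abs_nonneg _) hcK)
    have hnR : (n:ℝ) ≤ N0 := by exact_mod_cast hn
    have hoR : (o:ℝ) ≤ C := by exact_mod_cast ho
    have h0n : (0:ℝ) ≤ n := Nat.cast_nonneg n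
    have h0o : (0:ℝ) ≤ o := Nat.cast_nonneg o
    have hκs : 0 ≤ κa s := hκa s
    have hκsA : κa s ≤ A := hA' s hs
    have habs1 : |(n:ℝ) - (o:ℝ)| ≤ (N0:ℝ)+(C:ℝ)+2 := abs_le.mpr ⟨by linarith, by linarith⟩
    have habs2 : |(C:ℝ) - (o:ℝ)| ≤ (C:ℝ)+2 := abs_le.mpr ⟨by linarith, by linarith⟩
    set M1 : ℝ := κd*((C:ℝ)+1) + κe*((N0:ℝ)+(C:ℝ)+2) + A*((N0:ℝ)+(C:ℝ)+2)*((C:ℝ)+2) with hM1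
    -- term 1
    have h1 : |(-(κd * (o : ℝ) + κe * ((n : ℝ) - (o : ℝ)) +
        κa s * ((n : ℝ) - (o : ℝ)) * ((C : ℝ) - (o : ℝ)))) * P n o s| ≤ M1 * S s := by
      apply hterm _ _ (n, o) hp
      rw [abs_neg]
      calc |κd * (o : ℝ) + κe * ((n : ℝ) - (o : ℝ)) +
            κa s * ((n : ℝ) - (o : ℝ)) * ((C : ℝ) - (o : ℝ))|
          ≤ |κd * (o:ℝ)| + |κe * ((n:ℝ) - (o:ℝ))| +
            |κa s * ((n:ℝ) - (o:ℝ)) * ((C:ℝ) - (o:ℝ))| := abs_add_three _ _ _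
        _ ≤ M1 := by
            have e1 : |κd * (o:ℝ)| ≤ κd*((C:ℝ)+1) := by
              rw [abs_mul, abs_of_nonneg hκd, abs_of_nonneg h0o]
              nlinarith
            have e2 : |κe * ((n:ℝ) - (o:ℝ))| ≤ κe*((N0:ℝ)+(C:ℝ)+2) := by
              rw [abs_mul, abs_of_nonneg hκe]
              exact mul_le_mul_of_nonneg_left habs1 hκe
            have e3 : |κa s * ((n:ℝ) - (o:ℝ)) * ((C:ℝ) - (o:ℝ))| ≤
                A*((N0:ℝ)+(C:ℝ)+2)*((C:ℝ)+2) := by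
              rw [abs_mul, abs_mul, abs_of_nonneg hκs]
              exact mul_le_mul (mul_le_mul hκsA habs1 (abs_nonneg _) hA0) habs2
                (abs_nonneg _) (by positivity)
            rw [hM1]; linarith
    -- term 2
    have h2 : |(if o + 1 ≤ C then κd * ((o : ℝ) + 1) * P n (o + 1) s else 0)| ≤
        (κd*((C:ℝ)+1)) * S s := by
      by_cases hc : o + 1 ≤ C
      · rw [if_pos hc]
        exact hterm _ _ (n, o+1) ((hBmem _).mpr ⟨hn, hc, by omega⟩)
          (by rw [abs_mul, abs_of_nonneg hκd, abs_of_nonneg (by positivity)]; nlinarith)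
      · rw [if_neg hc, abs_zero]; positivity
    -- term 3
    have h3 : |(if n + 1 ≤ N0 then κe * ((n : ℝ) + 1 - (o : ℝ)) * P (n + 1) o s else 0)| ≤
        (κe*((N0:ℝ)+(C:ℝ)+2)) * S s := by
      by_cases hc : n + 1 ≤ N0
      · rw [if_pos hc]
        by_cases heq : o = n + 1
        · have hz : (n:ℝ) + 1 - (o:ℝ) = 0 := by subst heq; push_cast; ring
          simp only [hz, mul_zero, zero_mul, abs_zero]; positivity
        · refine hterm _ _ (n+1, o) ((hBmem _).mpr ⟨hc, ho, by omega⟩) ?_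
          rw [abs_mul, abs_of_nonneg hκe]
          refine mul_le_mul_of_nonneg_left (abs_le.mpr ⟨by push_cast; linarith,
            by push_cast; linarith⟩) hκe
      · rw [if_neg hc, abs_zero]; positivity
    -- term 4
    have h4 : |(if 1 ≤ o then κa s * ((n : ℝ) - (o : ℝ) + 1) * ((C : ℝ) - (o : ℝ) + 1) *
        P n (o - 1) s else 0)| ≤ (A*((N0:ℝ)+(C:ℝ)+2)*((C:ℝ)+2)) * S s := by
      by_cases hc : 1 ≤ o
      · rw [if_pos hc]
        by_cases heq : o = n + 1
        · have hz : (n:ℝ) - (o:ℝ) + 1 = 0 := by subst heq; push_cast; ring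
          simp only [hz, mul_zero, zero_mul, abs_zero]; positivity
        · refine hterm _ _ (n, o-1) ((hBmem _).mpr ⟨hn, by omega, by omega⟩) ?_
          rw [abs_mul, abs_mul, abs_of_nonneg hκs]
          refine mul_le_mul (mul_le_mul hκsA (abs_le.mpr ⟨by linarith, by linarith⟩)
            (abs_nonneg _) hA0) (abs_le.mpr ⟨by linarith, by linarith⟩)
            (abs_nonneg _) (by positivity)
      · rw [if_neg hc, abs_zero]; positivity
    rw [cmeRHS]
    calc |(-(κd * (o : ℝ) + κe * ((n : ℝ) - (o : ℝ)) +
          κa s * ((n : ℝ) - (o : ℝ)) * ((C : ℝ) - (o : ℝ)))) * P n o s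
        + (if o + 1 ≤ C then κd * ((o : ℝ) + 1) * P n (o + 1) s else 0)
        + (if n + 1 ≤ N0 then κe * ((n : ℝ) + 1 - (o : ℝ)) * P (n + 1) o s else 0)
        + (if 1 ≤ o then κa s * ((n : ℝ) - (o : ℝ) + 1) * ((C : ℝ) - (o : ℝ) + 1) *
            P n (o - 1) s else 0)|
        ≤ |(-(κd * (o : ℝ) + κe * ((n : ℝ) - (o : ℝ)) +
            κa s * ((n : ℝ) - (o : ℝ)) * ((C : ℝ) - (o : ℝ)))) * P n o s|
          + |(if o + 1 ≤ C then κd * ((o : ℝ) + 1) * P n (o + 1) s else 0)|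
          + |(if n + 1 ≤ N0 then κe * ((n : ℝ) + 1 - (o : ℝ)) * P (n + 1) o s else 0)|
          + |(if 1 ≤ o then κa s * ((n : ℝ) - (o : ℝ) + 1) * ((C : ℝ) - (o : ℝ) + 1) *
              P n (o - 1) s else 0)| := by
            exact le_trans (abs_add_le _ _) (add_le_add_left (abs_add_three _ _ _) _)
      _ ≤ M * S s := by rw [hM, hM1] at *; linarith
  -- Gronwall on the sum of squares over bad states
  set g : ℝ → ℝ := fun s => ∑ q ∈ B, P q.1 q.2 s * P q.1 q.2 s with hg
  set g' : ℝ → ℝ := fun s => ∑ q ∈ B,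
      (cmeRHS N0 C κd κe κa P q.1 q.2 s * P q.1 q.2 s +
       P q.1 q.2 s * cmeRHS N0 C κd κe κa P q.1 q.2 s) with hg'
  have hderiv : ∀ s : ℝ, 0 ≤ s → HasDerivAt g (g' s) s := by
    intro s hs
    simp only [hg, hg']
    apply HasDerivAt.fun_sum
    intro q hq
    obtain ⟨hn, ho, _⟩ := (hBmem q).mp hq
    exact (hP q.1 hn q.2 ho s hs).mul (hP q.1 hn q.2 ho s hs)
  have hgnn : ∀ x : ℝ, 0 ≤ g x := by
    intro x; simp only [hg]; exact Finset.sum_nonneg fun q _ => mul_self_nonneg _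
  set K : ℝ := M * (2 * (B.card : ℝ)) with hK
  have hCS : ∀ x : ℝ, S x * S x ≤ (B.card : ℝ) * g x := by
    intro x
    have h1 : (∑ q ∈ B, |P q.1 q.2 x|) ^ 2 ≤
        (B.card : ℝ) * ∑ q ∈ B, |P q.1 q.2 x| ^ 2 :=
      sq_sum_le_card_mul_sum_sq
    have h2 : ∑ q ∈ B, |P q.1 q.2 x| ^ 2 = g x := by
      simp only [hg]
      refine Finset.sum_congr rfl fun q _ => ?_
      rw [sq_abs]; ring
    simp only [hS]
    calc (∑ q ∈ B, |P q.1 q.2 x|) * (∑ q ∈ B, |P q.1 q.2 x|)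
        = (∑ q ∈ B, |P q.1 q.2 x|) ^ 2 := (sq _).symm
      _ ≤ (B.card : ℝ) * ∑ q ∈ B, |P q.1 q.2 x| ^ 2 := h1
      _ = (B.card : ℝ) * g x := by rw [h2]
  have hbound : ∀ x ∈ Set.Ico (0:ℝ) T, ‖g' x‖ ≤ K * ‖g x‖ + 0 := by
    intro x hx
    have hx' : x ∈ Set.Icc (0:ℝ) T := ⟨hx.1, le_of_lt hx.2⟩
    rw [Real.norm_eq_abs, Real.norm_eq_abs, abs_of_nonneg (hgnn x), add_zero]
    have step : ∀ q ∈ B,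
        |cmeRHS N0 C κd κe κa P q.1 q.2 x * P q.1 q.2 x +
         P q.1 q.2 x * cmeRHS N0 C κd κe κa P q.1 q.2 x| ≤
        2 * (M * S x) * |P q.1 q.2 x| := by
      intro q hq
      have h1 := key x hx' q hq
      have h2 : cmeRHS N0 C κd κe κa P q.1 q.2 x * P q.1 q.2 x +
          P q.1 q.2 x * cmeRHS N0 C κd κe κa P q.1 q.2 x =
          2 * cmeRHS N0 C κd κe κa P q.1 q.2 x * P q.1 q.2 x := by ring
      rw [h2, abs_mul, abs_mul, abs_two]
      have : |cmeRHS N0 C κd κe κa P q.1 q.2 x| * |P q.1 q.2 x| ≤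
          (M * S x) * |P q.1 q.2 x| :=
        mul_le_mul_of_nonneg_right h1 (abs_nonneg _)
      rw [mul_assoc, mul_assoc]
      linarith
    calc |g' x| ≤ ∑ q ∈ B, |cmeRHS N0 C κd κe κa P q.1 q.2 x * P q.1 q.2 x +
          P q.1 q.2 x * cmeRHS N0 C κd κe κa P q.1 q.2 x| := by
          simp only [hg']; exact Finset.abs_sum_le_sum_abs _ _
      _ ≤ ∑ q ∈ B, 2 * (M * S x) * |P q.1 q.2 x| := Finset.sum_le_sum step
      _ = 2 * M * (S x * S x) := by
          rw [← Finset.mul_sum]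
          simp only [hS]; ring
      _ ≤ 2 * M * ((B.card : ℝ) * g x) := by
          refine mul_le_mul_of_nonneg_left (hCS x) (by positivity)
      _ = K * g x := by rw [hK]; ring
  have hg0 : g 0 = 0 := by
    simp only [hg]
    refine Finset.sum_eq_zero fun q hq => ?_
    obtain ⟨hn, ho, hno⟩ := (hBmem q).mp hq
    rw [hinit0 q.1 q.2 (by omega)]
    ring
  have hcont : ContinuousOn g (Set.Icc 0 T) := fun x hx =>
    ((hderiv x hx.1).continuousAt).continuousWithinAt
  have hgr := norm_le_gronwallBound_of_norm_deriv_right_le hcont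
    (fun x hx => (hderiv x hx.1).hasDerivWithinAt) (δ := 0)
    (by rw [Real.norm_eq_abs, hg0, abs_zero]) hbound T ⟨hT, le_refl T⟩
  rw [gronwallBound_ε0] at hgr
  have hgT : g T = 0 := by
    have : ‖g T‖ ≤ 0 := by simpa using hgr
    rw [Real.norm_eq_abs] at this
    have := abs_nonneg (g T)
    linarith [abs_le.mp (le_antisymm ‹|g T| ≤ 0› (abs_nonneg _) ▸ le_refl (0:ℝ))]
  intro n hn o ho hno
  have hmem : (n, o) ∈ B := (hBmem _).mpr ⟨hn, ho, hno⟩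
  have := (Finset.sum_eq_zero_iff_of_nonneg (fun q _ => mul_self_nonneg (P q.1 q.2 T))).mp
    (by simpa only [hg] using hgT) (n, o) hmem
  exact mul_self_eq_zero.mp this


open Set Filter in
lemma cme_nonneg (N0 C : ℕ) (κd κe : ℝ) (κa : ℝ → ℝ)
    (hκd : 0 ≤ κd) (hκe : 0 ≤ κe) (hκa_cont : Continuous κa) (hκa : ∀ t, 0 ≤ κa t)
    (P : ℕ → ℕ → ℝ → ℝ) (hP : IsCMESolution N0 C κd κe κa P)
    (hinit1 : P N0 0 0 = 1)
    (hinit0 : ∀ n o : ℕ, ¬(n = N0 ∧ o = 0) → P n o 0 = 0) :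
    ∀ t : ℝ, 0 ≤ t → ∀ n, n ≤ N0 → ∀ o, o ≤ C → 0 ≤ P n o t := by
  have vanish := cme_vanish N0 C κd κe κa hκd hκe hκa_cont hκa P hP hinit0
  intro T hT n hn o ho
  rcases Nat.lt_or_ge n o with hno | hon
  · rw [vanish T hT n hn o ho hno]
  set Gd : Finset (ℕ × ℕ) :=
    ((Finset.range (N0+1)) ×ˢ (Finset.range (C+1))).filter (fun p => p.2 ≤ p.1) with hGd
  have hGmem : ∀ p : ℕ × ℕ, p ∈ Gd ↔ (p.1 ≤ N0 ∧ p.2 ≤ C ∧ p.2 ≤ p.1) := by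
    intro p
    simp only [hGd, Finset.mem_filter, Finset.mem_product, Finset.mem_range, Nat.lt_succ_iff]
    tauto
  obtain ⟨A0, hA⟩ := (isCompact_Icc (a := (0:ℝ)) (b := T)).exists_bound_of_continuousOn
    hκa_cont.continuousOn
  set A := max A0 0 with hAdef
  have hA' : ∀ s ∈ Set.Icc (0:ℝ) T, κa s ≤ A := by
    intro s hs
    have := hA s hs
    rw [Real.norm_eq_abs] at this
    exact le_trans (le_abs_self _) (le_trans this (le_max_left _ _))
  have hA0 : 0 ≤ A := le_max_right _ _
  set K : ℝ := κd*((C:ℝ)+1) + κe*((N0:ℝ)+1) + A*((N0:ℝ)+1)*((C:ℝ)+1) + 1 with hK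
  have hinitnn : ∀ p : ℕ × ℕ, 0 ≤ P p.1 p.2 0 := by
    intro p
    by_cases hp : p.1 = N0 ∧ p.2 = 0
    · obtain ⟨h1, h2⟩ := hp
      rw [show P p.1 p.2 0 = P N0 0 0 by rw [h1, h2], hinit1]
      norm_num
    · rw [hinit0 p.1 p.2 hp]
  have claim : ∀ ε : ℝ, 0 < ε → ∀ t ∈ Set.Icc (0:ℝ) T, ∀ p ∈ Gd,
      0 < P p.1 p.2 t + ε * Real.exp (K * t) := by
    intro ε hε
    by_contra hcon
    push_neg at hcon
    obtain ⟨t1, ht1, p1, hp1, hz1⟩ := hcon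
    set E : Set ℝ := ⋃ p ∈ Gd, (Set.Icc 0 T ∩
      (fun t => P p.1 p.2 t + ε * Real.exp (K * t)) ⁻¹' Set.Iic 0) with hE
    have hce : Continuous fun s : ℝ => ε * Real.exp (K * s) :=
      continuous_const.mul (Real.continuous_exp.comp (continuous_const.mul continuous_id))
    have hcontP : ∀ p : ℕ × ℕ, p ∈ Gd →
        ContinuousOn (fun t => P p.1 p.2 t + ε * Real.exp (K * t)) (Set.Icc 0 T) := by
      intro p hp x hx
      obtain ⟨hq1, hq2, _⟩ := (hGmem p).mp hp
      exact (((hP p.1 hq1 p.2 hq2 x hx.1).continuousAt).add hce.continuousAt).continuousWithinAt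
    have hEclosed : IsClosed E := by
      rw [hE]
      refine isClosed_biUnion_finset fun p hp => ?_
      exact (hcontP p hp).preimage_isClosed_of_isClosed isClosed_Icc isClosed_Iic
    have hEmem : ∀ t : ℝ, t ∈ E ↔ ∃ p ∈ Gd, t ∈ Set.Icc (0:ℝ) T ∧
        P p.1 p.2 t + ε * Real.exp (K * t) ≤ 0 := by
      intro t
      constructor
      · intro ht
        obtain ⟨p, hp, h1, h2⟩ := Set.mem_iUnion₂.mp ht
        exact ⟨p, hp, h1, h2⟩
      · rintro ⟨p, hp, h1, h2⟩
        exact Set.mem_iUnion₂.mpr ⟨p, hp, h1, h2⟩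
    have hEne : E.Nonempty := ⟨t1, (hEmem t1).mpr ⟨p1, hp1, ht1, hz1⟩⟩
    have hEbdd : BddBelow E := by
      refine ⟨0, fun x hx => ?_⟩
      obtain ⟨p, _, hx', _⟩ := (hEmem x).mp hx
      exact hx'.1
    set t0 : ℝ := sInf E with ht0
    have ht0E : t0 ∈ E := hEclosed.csInf_mem hEne hEbdd
    obtain ⟨p, hpG, ht0Icc, hpz⟩ := (hEmem t0).mp ht0E
    obtain ⟨hpn, hpo, hpon⟩ := (hGmem p).mp hpG
    have hlb : ∀ s : ℝ, 0 ≤ s → s < t0 → ∀ q ∈ Gd,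
        0 < P q.1 q.2 s + ε * Real.exp (K * s) := by
      intro s hs0 hst q hqG
      by_contra hc
      push_neg at hc
      have hsE : s ∈ E := (hEmem s).mpr ⟨q, hqG, ⟨hs0, le_trans hst.le ht0Icc.2⟩, hc⟩
      exact absurd (csInf_le hEbdd hsE) (not_le.mpr hst)
    have ht0pos : 0 < t0 := by
      rcases lt_or_eq_of_le ht0Icc.1 with h | h
      · exact h
      · exfalso
        have h2 : 0 < P p.1 p.2 t0 + ε * Real.exp (K * t0) := by
          rw [← h, mul_zero, Real.exp_zero, mul_one]
          have := hinitnn p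
          linarith
        linarith
    have hz0 : ∀ q ∈ Gd, 0 ≤ P q.1 q.2 t0 + ε * Real.exp (K * t0) := by
      intro q hqG
      obtain ⟨hq1, hq2, _⟩ := (hGmem q).mp hqG
      refine aux_nonneg_of_left (f := fun s => P q.1 q.2 s + ε * Real.exp (K * s))
        (((hP q.1 hq1 q.2 hq2 t0 ht0Icc.1).continuousAt).add hce.continuousAt)
        (show t0/2 < t0 by linarith) ?_
      intro s hs1 hs2
      exact (hlb s (by linarith) hs2 q hqG).le
    have hPp : P p.1 p.2 t0 = -(ε * Real.exp (K * t0)) := by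
      have := hz0 p hpG
      linarith
    set e : ℝ := ε * Real.exp (K * t0) with he
    have hepos : 0 < e := by rw [he]; positivity
    have hexp : HasDerivAt (fun s : ℝ => ε * Real.exp (K * s))
        (ε * (Real.exp (K * t0) * K)) t0 := by
      have h1 : HasDerivAt (fun s : ℝ => K * s) K t0 := by
        simpa using (hasDerivAt_id t0).const_mul K
      have h2 := (Real.hasDerivAt_exp (K * t0)).comp t0 h1
      simpa [mul_comm] using h2.const_mul ε
    have hD : HasDerivAt (fun s => P p.1 p.2 s + ε * Real.exp (K * s))
        (cmeRHS N0 C κd κe κa P p.1 p.2 t0 + ε * (Real.exp (K * t0) * K)) t0 :=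
      (hP p.1 hpn p.2 hpo t0 ht0Icc.1).add hexp
    have hDnonpos : cmeRHS N0 C κd κe κa P p.1 p.2 t0 + ε * (Real.exp (K * t0) * K) ≤ 0 := by
      refine aux_deriv_nonpos_of_left hD (show t0/2 < t0 by linarith) ?_
      intro s hs1 hs2
      have h0 : P p.1 p.2 t0 + ε * Real.exp (K * t0) = 0 := by rw [hPp]; ring
      have := hlb s (by linarith) hs2 p hpG
      simpa [h0] using this
    obtain ⟨nn, oo⟩ := p
    simp only at hpn hpo hpon hPp hDnonpos
    have hnR : (nn:ℝ) ≤ N0 := by exact_mod_cast hpn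
    have hoR : (oo:ℝ) ≤ C := by exact_mod_cast hpo
    have honR : (oo:ℝ) ≤ nn := by exact_mod_cast hpon
    have h0o : (0:ℝ) ≤ oo := Nat.cast_nonneg oo
    have hκt0 : 0 ≤ κa t0 := hκa t0
    have hκt0A : κa t0 ≤ A := hA' t0 ht0Icc
    have hT1 : 0 ≤ -(κd * (oo : ℝ) + κe * ((nn : ℝ) - (oo : ℝ)) +
        κa t0 * ((nn : ℝ) - (oo : ℝ)) * ((C : ℝ) - (oo : ℝ))) * P nn oo t0 := by
      rw [hPp]
      have hd : 0 ≤ κd * (oo : ℝ) + κe * ((nn : ℝ) - (oo : ℝ)) +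
          κa t0 * ((nn : ℝ) - (oo : ℝ)) * ((C : ℝ) - (oo : ℝ)) := by
        have h1 : 0 ≤ κa t0 * ((nn : ℝ) - (oo : ℝ)) * ((C : ℝ) - (oo : ℝ)) :=
          mul_nonneg (mul_nonneg hκt0 (by linarith)) (by linarith)
        have h2 : 0 ≤ κe * ((nn : ℝ) - (oo : ℝ)) := mul_nonneg hκe (by linarith)
        have h3 : 0 ≤ κd * (oo : ℝ) := mul_nonneg hκd h0o
        linarith
      nlinarith [mul_nonneg hd hepos.le]
    have hT2 : -(κd*((C:ℝ)+1)*e) ≤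
        (if oo + 1 ≤ C then κd * ((oo : ℝ) + 1) * P nn (oo + 1) t0 else 0) := by
      by_cases hc : oo + 1 ≤ C
      · rw [if_pos hc]
        rcases Nat.lt_or_ge nn (oo + 1) with h | h
        · rw [vanish t0 ht0Icc.1 nn hpn (oo + 1) hc h, mul_zero]
          have : 0 ≤ κd*((C:ℝ)+1)*e := by positivity
          linarith
        · have hq : (nn, oo + 1) ∈ Gd := (hGmem _).mpr ⟨hpn, hc, h⟩
          have h5 : 0 ≤ κd * ((oo:ℝ)+1) * (P nn (oo+1) t0 + e) :=
            mul_nonneg (by positivity) (hz0 _ hq)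
          have hcoef2 : κd*((oo:ℝ)+1) * e ≤ κd*((C:ℝ)+1) * e := by
            have : κd*((oo:ℝ)+1) ≤ κd*((C:ℝ)+1) := by nlinarith
            exact mul_le_mul_of_nonneg_right this hepos.le
          rw [mul_add] at h5
          linarith
      · rw [if_neg hc]
        have : 0 ≤ κd*((C:ℝ)+1)*e := by positivity
        linarith
    have hT3 : -(κe*((N0:ℝ)+1)*e) ≤
        (if nn + 1 ≤ N0 then κe * ((nn : ℝ) + 1 - (oo : ℝ)) * P (nn + 1) oo t0 else 0) := by
      by_cases hc : nn + 1 ≤ N0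
      · rw [if_pos hc]
        have hq : (nn + 1, oo) ∈ Gd := (hGmem _).mpr ⟨hc, hpo, by omega⟩
        have hcoef1 : 0 ≤ κe * ((nn:ℝ) + 1 - (oo:ℝ)) := mul_nonneg hκe (by linarith)
        have h5 : 0 ≤ κe * ((nn:ℝ) + 1 - (oo:ℝ)) * (P (nn+1) oo t0 + e) :=
          mul_nonneg hcoef1 (hz0 _ hq)
        have hcoef2 : κe * ((nn:ℝ) + 1 - (oo:ℝ)) * e ≤ κe*((N0:ℝ)+1) * e := by
          have h6 : (nn:ℝ) + 1 ≤ (N0:ℝ) + 1 := by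
            have : (nn:ℝ) + 1 ≤ (N0:ℝ) + 1 - 1 + 1 := by
              have : (nn:ℝ) + 1 ≤ (N0:ℝ) := by exact_mod_cast hc
              linarith
            linarith
          have : κe * ((nn:ℝ) + 1 - (oo:ℝ)) ≤ κe*((N0:ℝ)+1) := by nlinarith
          exact mul_le_mul_of_nonneg_right this hepos.le
        rw [mul_add] at h5
        linarith
      · rw [if_neg hc]
        have : 0 ≤ κe*((N0:ℝ)+1)*e := by positivity
        linarith
    have hT4 : -(A*((N0:ℝ)+1)*((C:ℝ)+1)*e) ≤
        (if 1 ≤ oo then κa t0 * ((nn : ℝ) - (oo : ℝ) + 1) * ((C : ℝ) - (oo : ℝ) + 1) *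
          P nn (oo - 1) t0 else 0) := by
      by_cases hc : 1 ≤ oo
      · rw [if_pos hc]
        have hq : (nn, oo - 1) ∈ Gd := (hGmem _).mpr ⟨hpn, by omega, by omega⟩
        have hcoef1 : 0 ≤ κa t0 * ((nn:ℝ) - (oo:ℝ) + 1) * ((C:ℝ) - (oo:ℝ) + 1) :=
          mul_nonneg (mul_nonneg hκt0 (by linarith)) (by linarith)
        have h5 : 0 ≤ κa t0 * ((nn:ℝ) - (oo:ℝ) + 1) * ((C:ℝ) - (oo:ℝ) + 1) *
            (P nn (oo - 1) t0 + e) := mul_nonneg hcoef1 (hz0 _ hq)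
        have hcoef2 : κa t0 * ((nn:ℝ) - (oo:ℝ) + 1) * ((C:ℝ) - (oo:ℝ) + 1) * e ≤
            A*((N0:ℝ)+1)*((C:ℝ)+1) * e := by
          have h7 : κa t0 * ((nn:ℝ) - (oo:ℝ) + 1) * ((C:ℝ) - (oo:ℝ) + 1) ≤
              A*((N0:ℝ)+1)*((C:ℝ)+1) := by
            refine mul_le_mul (mul_le_mul hκt0A (by linarith) (by linarith) hA0)
              (by linarith) (by linarith) (by positivity)
          exact mul_le_mul_of_nonneg_right h7 hepos.le
        rw [mul_add] at h5
        linarith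
      · rw [if_neg hc]
        have : 0 ≤ A*((N0:ℝ)+1)*((C:ℝ)+1)*e := by positivity
        linarith
    have hKe : ε * (Real.exp (K * t0) * K) =
        κd*((C:ℝ)+1)*e + κe*((N0:ℝ)+1)*e + A*((N0:ℝ)+1)*((C:ℝ)+1)*e + e := by
      rw [he, hK]; ring
    rw [cmeRHS] at hDnonpos
    linarith
  -- conclude
  have hgood : (n, o) ∈ Gd := (hGmem _).mpr ⟨hn, ho, hon⟩
  by_contra hneg
  push_neg at hneg
  have hexpT : 0 < Real.exp (K * T) := Real.exp_pos _
  set ε : ℝ := -P n o T / (2 * Real.exp (K * T)) with hεdef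
  have hε : 0 < ε := by
    rw [hεdef]
    apply div_pos (by linarith) (by positivity)
  have hcl : 0 < P n o T + ε * Real.exp (K * T) := claim ε hε T ⟨hT, le_refl T⟩ (n, o) hgood
  have hval : ε * Real.exp (K * T) = -P n o T / 2 := by
    rw [hεdef]
    field_simp
  rw [hval] at hcl
  linarith


open Set Filter in
/-- For the solution of the synaptic CME started from `(N0, 0)`, the
lower tail of the marginal `P_N` is nondecreasing in time. -/
theorem cme_margN_lower_tail_monotone
    (N0 C : ℕ) (κd κe : ℝ) (κa : ℝ → ℝ)
    (hN0 : 1 ≤ N0) (hC : 1 ≤ C) (hκd : 0 ≤ κd) (hκe : 0 ≤ κe)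
    (hκa_cont : Continuous κa) (hκa : ∀ t : ℝ, 0 ≤ κa t)
    (P : ℕ → ℕ → ℝ → ℝ) (hP : IsCMESolution N0 C κd κe κa P)
    (hinit1 : P N0 0 0 = 1)
    (hinit0 : ∀ n o : ℕ, ¬(n = N0 ∧ o = 0) → P n o 0 = 0) :
    ∀ n0 : ℕ, n0 ≤ N0 → ∀ t t' : ℝ, 0 ≤ t → t ≤ t' →
      ∑ n ∈ Finset.range (n0 + 1), margN C P n t ≤
        ∑ n ∈ Finset.range (n0 + 1), margN C P n t' := by
  have vanish := cme_vanish N0 C κd κe κa hκd hκe hκa_cont hκa P hP hinit0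
  have nonneg := cme_nonneg N0 C κd κe κa hκd hκe hκa_cont hκa P hP hinit1 hinit0
  intro n0 hn0 t t' ht htt'
  set F : ℝ → ℝ :=
    fun s => ∑ n ∈ Finset.range (n0+1), ∑ o ∈ Finset.range (C+1), P n o s with hF
  have hFeq : ∀ s : ℝ, ∑ n ∈ Finset.range (n0 + 1), margN C P n s = F s := by
    intro s; simp only [hF, margN]
  rw [hFeq t, hFeq t']
  set D : ℝ → ℝ := fun s => ∑ o ∈ Finset.range (C+1),
      (κe * (o:ℝ) * P 0 o s +
        (if n0 + 1 ≤ N0 then κe * ((n0:ℝ)+1-(o:ℝ)) * P (n0+1) o s else 0)) with hD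
  -- the telescoping identity
  have hsum : ∀ s : ℝ,
      (∑ n ∈ Finset.range (n0+1), ∑ o ∈ Finset.range (C+1), cmeRHS N0 C κd κe κa P n o s)
      = D s := by
    intro s
    have expand : ∀ n o : ℕ, cmeRHS N0 C κd κe κa P n o s =
        ((-(κd * (o:ℝ)) * P n o s) + (if o + 1 ≤ C then κd * ((o:ℝ)+1) * P n (o+1) s else 0))
        + ((-(κa s * ((n:ℝ)-(o:ℝ)) * ((C:ℝ)-(o:ℝ))) * P n o s) +
            (if 1 ≤ o then κa s * ((n:ℝ)-(o:ℝ)+1) * ((C:ℝ)-(o:ℝ)+1) * P n (o-1) s else 0))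
        + ((-(κe * ((n:ℝ)-(o:ℝ))) * P n o s) +
            (if n + 1 ≤ N0 then κe * ((n:ℝ)+1-(o:ℝ)) * P (n+1) o s else 0)) := by
      intro n o
      rw [cmeRHS]
      ring
    have SA : ∀ n : ℕ, ∑ o ∈ Finset.range (C+1),
        ((-(κd * (o:ℝ)) * P n o s) +
          (if o + 1 ≤ C then κd * ((o:ℝ)+1) * P n (o+1) s else 0)) = 0 := by
      intro n
      rw [Finset.sum_add_distrib]
      have e1 : ∑ o ∈ Finset.range (C+1), (-(κd * (o:ℝ)) * P n o s)
          = ∑ o ∈ Finset.range C, (-(κd * ((o:ℝ)+1)) * P n (o+1) s) := by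
        rw [Finset.sum_range_succ']
        have h0 : (-(κd * ((0:ℕ):ℝ)) * P n 0 s) = 0 := by norm_num
        rw [h0, add_zero]
        exact Finset.sum_congr rfl fun o _ => by push_cast; ring
      have e2 : ∑ o ∈ Finset.range (C+1),
          (if o + 1 ≤ C then κd * ((o:ℝ)+1) * P n (o+1) s else 0)
          = ∑ o ∈ Finset.range C, (κd * ((o:ℝ)+1) * P n (o+1) s) := by
        rw [Finset.sum_range_succ, if_neg (by omega), add_zero]
        exact Finset.sum_congr rfl fun o ho =>
          if_pos (by have := Finset.mem_range.mp ho; omega)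
      rw [e1, e2, ← Finset.sum_add_distrib]
      exact Finset.sum_eq_zero fun o _ => by ring
    have SB : ∀ n : ℕ, ∑ o ∈ Finset.range (C+1),
        ((-(κa s * ((n:ℝ)-(o:ℝ)) * ((C:ℝ)-(o:ℝ))) * P n o s) +
          (if 1 ≤ o then κa s * ((n:ℝ)-(o:ℝ)+1) * ((C:ℝ)-(o:ℝ)+1) * P n (o-1) s else 0)) = 0 := by
      intro n
      rw [Finset.sum_add_distrib]
      have e1 : ∑ o ∈ Finset.range (C+1),
          (-(κa s * ((n:ℝ)-(o:ℝ)) * ((C:ℝ)-(o:ℝ))) * P n o s)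
          = ∑ o ∈ Finset.range C, (-(κa s * ((n:ℝ)-(o:ℝ)) * ((C:ℝ)-(o:ℝ))) * P n o s) := by
        rw [Finset.sum_range_succ]
        have h0 : (-(κa s * ((n:ℝ)-((C:ℕ):ℝ)) * ((C:ℝ)-((C:ℕ):ℝ))) * P n C s) = 0 := by
          rw [sub_self, mul_zero, neg_zero, zero_mul]
        rw [h0, add_zero]
      have e2 : ∑ o ∈ Finset.range (C+1),
          (if 1 ≤ o then κa s * ((n:ℝ)-(o:ℝ)+1) * ((C:ℝ)-(o:ℝ)+1) * P n (o-1) s else 0)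
          = ∑ o ∈ Finset.range C, (κa s * ((n:ℝ)-(o:ℝ)) * ((C:ℝ)-(o:ℝ)) * P n o s) := by
        rw [Finset.sum_range_succ', if_neg (by omega), add_zero]
        refine Finset.sum_congr rfl fun o _ => ?_
        rw [if_pos (by omega)]
        simp only [Nat.add_sub_cancel]
        push_cast
        ring
      rw [e1, e2, ← Finset.sum_add_distrib]
      exact Finset.sum_eq_zero fun o _ => by ring
    have SC : ∀ o : ℕ, ∑ n ∈ Finset.range (n0+1),
        ((-(κe * ((n:ℝ)-(o:ℝ))) * P n o s) +
          (if n + 1 ≤ N0 then κe * ((n:ℝ)+1-(o:ℝ)) * P (n+1) o s else 0))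
        = κe * (o:ℝ) * P 0 o s +
          (if n0 + 1 ≤ N0 then κe * ((n0:ℝ)+1-(o:ℝ)) * P (n0+1) o s else 0) := by
      intro o
      rw [Finset.sum_add_distrib]
      have e1 : ∑ n ∈ Finset.range (n0+1), (-(κe * ((n:ℝ)-(o:ℝ))) * P n o s)
          = (∑ n ∈ Finset.range n0, (-(κe * (((n:ℝ)+1)-(o:ℝ))) * P (n+1) o s))
            + κe * (o:ℝ) * P 0 o s := by
        rw [Finset.sum_range_succ']
        congr 1
        · exact Finset.sum_congr rfl fun n _ => by push_cast; ring
        · push_cast; ring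
      have e2 : ∑ n ∈ Finset.range (n0+1),
          (if n + 1 ≤ N0 then κe * ((n:ℝ)+1-(o:ℝ)) * P (n+1) o s else 0)
          = (∑ n ∈ Finset.range n0, (κe * ((n:ℝ)+1-(o:ℝ)) * P (n+1) o s)) +
            (if n0 + 1 ≤ N0 then κe * ((n0:ℝ)+1-(o:ℝ)) * P (n0+1) o s else 0) := by
        rw [Finset.sum_range_succ]
        congr 1
        exact Finset.sum_congr rfl fun n hn =>
          if_pos (by have := Finset.mem_range.mp hn; omega)
      rw [e1, e2]
      have hcancel : (∑ n ∈ Finset.range n0, (-(κe * (((n:ℝ)+1)-(o:ℝ))) * P (n+1) o s)) +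
          (∑ n ∈ Finset.range n0, (κe * ((n:ℝ)+1-(o:ℝ)) * P (n+1) o s)) = 0 := by
        rw [← Finset.sum_add_distrib]
        exact Finset.sum_eq_zero fun n _ => by ring
      linarith
    have per_n : ∀ n ∈ Finset.range (n0+1),
        ∑ o ∈ Finset.range (C+1), cmeRHS N0 C κd κe κa P n o s
        = ∑ o ∈ Finset.range (C+1), ((-(κe * ((n:ℝ)-(o:ℝ))) * P n o s) +
            (if n + 1 ≤ N0 then κe * ((n:ℝ)+1-(o:ℝ)) * P (n+1) o s else 0)) := by
      intro n _
      calc ∑ o ∈ Finset.range (C+1), cmeRHS N0 C κd κe κa P n o s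
          = ∑ o ∈ Finset.range (C+1),
            (((-(κd * (o:ℝ)) * P n o s) +
              (if o + 1 ≤ C then κd * ((o:ℝ)+1) * P n (o+1) s else 0))
            + ((-(κa s * ((n:ℝ)-(o:ℝ)) * ((C:ℝ)-(o:ℝ))) * P n o s) +
                (if 1 ≤ o then κa s * ((n:ℝ)-(o:ℝ)+1) * ((C:ℝ)-(o:ℝ)+1) * P n (o-1) s else 0))
            + ((-(κe * ((n:ℝ)-(o:ℝ))) * P n o s) +
                (if n + 1 ≤ N0 then κe * ((n:ℝ)+1-(o:ℝ)) * P (n+1) o s else 0))) :=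
            Finset.sum_congr rfl fun o _ => expand n o
        _ = (∑ o ∈ Finset.range (C+1), ((-(κd * (o:ℝ)) * P n o s) +
              (if o + 1 ≤ C then κd * ((o:ℝ)+1) * P n (o+1) s else 0)))
            + (∑ o ∈ Finset.range (C+1), ((-(κa s * ((n:ℝ)-(o:ℝ)) * ((C:ℝ)-(o:ℝ))) * P n o s) +
              (if 1 ≤ o then κa s * ((n:ℝ)-(o:ℝ)+1) * ((C:ℝ)-(o:ℝ)+1) * P n (o-1) s else 0)))
            + ∑ o ∈ Finset.range (C+1), ((-(κe * ((n:ℝ)-(o:ℝ))) * P n o s) +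
              (if n + 1 ≤ N0 then κe * ((n:ℝ)+1-(o:ℝ)) * P (n+1) o s else 0)) := by
            rw [Finset.sum_add_distrib, Finset.sum_add_distrib]
        _ = ∑ o ∈ Finset.range (C+1), ((-(κe * ((n:ℝ)-(o:ℝ))) * P n o s) +
              (if n + 1 ≤ N0 then κe * ((n:ℝ)+1-(o:ℝ)) * P (n+1) o s else 0)) := by
            rw [SA n, SB n]; ring
    rw [Finset.sum_congr rfl per_n, Finset.sum_comm]
    simp only [hD]
    exact Finset.sum_congr rfl fun o _ => SC o
  have hderiv : ∀ s : ℝ, 0 ≤ s → HasDerivAt F (D s) s := by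
    intro s hs
    have h1 : HasDerivAt F
        (∑ n ∈ Finset.range (n0+1), ∑ o ∈ Finset.range (C+1), cmeRHS N0 C κd κe κa P n o s)
        s := by
      simp only [hF]
      apply HasDerivAt.fun_sum
      intro n hnn
      apply HasDerivAt.fun_sum
      intro o hoo
      exact hP n (by have := Finset.mem_range.mp hnn; omega) o
        (by have := Finset.mem_range.mp hoo; omega) s hs
    rw [hsum s] at h1
    exact h1
  have hDnonneg : ∀ s : ℝ, 0 ≤ s → 0 ≤ D s := by
    intro s hs
    simp only [hD]
    refine Finset.sum_nonneg fun o hoo => ?_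
    have ho : o ≤ C := by have := Finset.mem_range.mp hoo; omega
    have hterm1 : κe * (o:ℝ) * P 0 o s = 0 := by
      rcases Nat.eq_zero_or_pos o with h | h
      · subst h; norm_num
      · rw [vanish s hs 0 (Nat.zero_le _) o ho h, mul_zero]
    have hterm2 : 0 ≤
        (if n0 + 1 ≤ N0 then κe * ((n0:ℝ)+1-(o:ℝ)) * P (n0+1) o s else 0) := by
      by_cases hc : n0 + 1 ≤ N0
      · rw [if_pos hc]
        rcases Nat.lt_or_ge (n0+1) o with h | h
        · rw [vanish s hs (n0+1) hc o ho h, mul_zero]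
        · refine mul_nonneg (mul_nonneg hκe ?_) (nonneg s hs (n0+1) hc o ho)
          have hoR : (o:ℝ) ≤ (n0:ℝ)+1 := by exact_mod_cast h
          linarith
      · rw [if_neg hc]
    linarith
  have hmono : MonotoneOn F (Set.Ici (0:ℝ)) := by
    refine monotoneOn_of_deriv_nonneg (convex_Ici 0)
      (fun x hx => ((hderiv x hx).continuousAt).continuousWithinAt) ?_ ?_
    · intro x hx
      rw [interior_Ici] at hx
      exact ((hderiv x (le_of_lt hx)).differentiableAt).differentiableWithinAt
    · intro x hx
      rw [interior_Ici] at hx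
      rw [(hderiv x (le_of_lt hx)).deriv]
      exact hDnonneg x (le_of_lt hx)
  exact hmono (Set.mem_Ici.mpr ht) (Set.mem_Ici.mpr (by linarith)) htt'
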